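/- Every finitely generated nilpotent group is residually finite. -/

import Mathlib

open Subgroup

universe u

/-- A finitely generated commutative torsion group is finite. -/
lemma finite_of_commGroup_fg_torsion (A : Type*) [CommGroup A] [Group.FG A]
    (h : ∀ a : A, ∃ n : ℕ, 0 < n ∧ a ^ n = 1) : Finite A := by
  obtain ⟨S, hS⟩ := Group.FG.out (G := A)
  have key : ∀ S : Finset A, ((closure (S : Set A) : Subgroup A) : Set A).Finite := by
    classical
    intro S
    induction S using Finset.induction with
    | empty => simp
    | @insert a S ha ih =>
      rw [Finset.coe_insert, Set.insert_eq, Subgroup.closure_union, ← Subgroup.zpowers_eq_closure, Subgroup.mul_normal (zpowers a) (closure (S : Set A))]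
      apply Set.Finite.mul _ ih
      obtain ⟨n, hn, hn1⟩ := h a
      have : IsOfFinOrder a := isOfFinOrder_iff_pow_eq_one.2 ⟨n, hn, hn1⟩
      rw [← this.powers_eq_zpowers]
      exact this.finite_powers
  have := key S
  rw [hS] at this
  simp only [Subgroup.coe_top] at this
  exact Set.finite_univ_iff.mp this


section Helpers
variable {Q : Type*} [Group Q]

lemma conj_pow_of_comm_central (x g c : Q) (hc : ∀ y : Q, y * c = c * y)
    (hgx : g⁻¹ * x * g = x * c) : ∀ n : ℕ, g⁻¹ * x ^ n * g = x ^ n * c ^ n := by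
  intro n
  induction n with
  | zero => simp
  | succ n ih =>
    have step : g⁻¹ * x ^ (n+1) * g = (g⁻¹ * x ^ n * g) * (g⁻¹ * x * g) := by
      rw [pow_succ]; simp [mul_assoc]
    have hxc : x * c ^ n = c ^ n * x := (Commute.pow_right (hc x) n).eq
    rw [step, ih, hgx, pow_succ, pow_succ]
    calc x ^ n * c ^ n * (x * c) = x ^ n * (c ^ n * x) * c := by simp [mul_assoc]
      _ = x ^ n * (x * c ^ n) * c := by rw [← hxc]
      _ = x ^ n * x * (c ^ n * c) := by simp [mul_assoc]

/-- If all commutators of `x` are central, then some positive power of `x` is central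
(in a f.g. group with torsion center). -/
lemma pow_mem_center_of_comm_central [Group.FG Q]
    (hZ : ∀ z ∈ Subgroup.center Q, ∃ n : ℕ, 0 < n ∧ z ^ n = 1)
    (x : Q) (hx : ∀ g : Q, x⁻¹ * g⁻¹ * x * g ∈ Subgroup.center Q) :
    ∃ n : ℕ, 0 < n ∧ x ^ n ∈ Subgroup.center Q := by
  obtain ⟨S, hS⟩ := Group.FG.out (G := Q)
  choose m hm hm1 using fun g => hZ _ (hx g)
  set N : ℕ := ∏ s ∈ S, m s with hN
  have hNpos : 0 < N := Finset.prod_pos fun s _ => hm s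
  have hcomm : ∀ s ∈ S, s⁻¹ * x ^ N * s = x ^ N := by
    intro s hs
    have hcentral : ∀ y : Q, y * (x⁻¹ * s⁻¹ * x * s) = (x⁻¹ * s⁻¹ * x * s) * y := by
      intro y
      exact (Subgroup.mem_center_iff.mp (hx s) y)
    have hgx : s⁻¹ * x * s = x * (x⁻¹ * s⁻¹ * x * s) := by group
    have := conj_pow_of_comm_central x s _ hcentral hgx N
    obtain ⟨k, hk⟩ : m s ∣ N := Finset.dvd_prod_of_mem m hs
    have h2 : (x⁻¹ * s⁻¹ * x * s) ^ N = 1 := by rw [hk, pow_mul, hm1 s, one_pow]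
    rw [this, h2, mul_one]
  have : x ^ N ∈ Subgroup.center Q := by
    rw [Subgroup.mem_center_iff]
    intro g
    have hg : g ∈ closure (S : Set Q) := hS ▸ Subgroup.mem_top g
    have hcomm' : ∀ s ∈ (S : Set Q), Commute s (x ^ N) := by
      intro s hs
      have h := hcomm s hs
      have h2 := congrArg (fun y => s * y) h
      exact (by simpa [mul_assoc] using h2 : x ^ N * s = s * x ^ N).symm
    induction hg using Subgroup.closure_induction with
    | mem s hs => exact hcomm' s hs
    | one => exact Commute.one_left _
    | mul a b _ _ ha hb => exact Commute.mul_left ha hb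
    | inv a _ ha => exact Commute.inv_left ha
  exact ⟨N, hNpos, this⟩

end Helpers

/-- A f.g. nilpotent group whose center is torsion is a torsion group. -/
lemma torsion_of_center_torsion :
    ∀ (c : ℕ) (Q : Type u) (_ : Group Q) (_ : Group.FG Q) (_ : Group.IsNilpotent Q),
      Group.nilpotencyClass Q ≤ c →
      (∀ z ∈ Subgroup.center Q, ∃ n : ℕ, 0 < n ∧ z ^ n = 1) →
      ∀ x : Q, ∃ n : ℕ, 0 < n ∧ x ^ n = 1 := by
  intro c
  induction c with
  | zero =>
    intro Q _ _ _ hc _ x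
    have : Subsingleton Q := (nilpotencyClass_zero_iff_subsingleton).mp (Nat.le_zero.mp hc)
    exact ⟨1, one_pos, Subsingleton.elim _ _⟩
  | succ c ih =>
    intro Q _ _ _ hc hZ x
    set Z := Subgroup.center Q
    let π : Q →* Q ⧸ Z := QuotientGroup.mk' Z
    have hZ' : ∀ z ∈ Subgroup.center (Q ⧸ Z), ∃ n : ℕ, 0 < n ∧ z ^ n = 1 := by
      intro z hz
      obtain ⟨y, rfl⟩ := QuotientGroup.mk'_surjective Z z
      have hy : ∀ g : Q, y⁻¹ * g⁻¹ * y * g ∈ Z := by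
        intro g
        have h2 := Subgroup.mem_center_iff.mp hz (π g)
        apply (QuotientGroup.eq_one_iff _).mp
        show π (y⁻¹ * g⁻¹ * y * g) = 1
        simp only [map_mul, map_inv]
        have h3 : (π y)⁻¹ * (π g)⁻¹ * π y * π g = (π y)⁻¹ * ((π g)⁻¹ * (π y * π g)) := by
          simp [mul_assoc]
        rw [h3, ← h2]
        simp only [inv_mul_cancel_left]
        exact inv_mul_cancel _
      obtain ⟨n, hn, hn1⟩ := pow_mem_center_of_comm_central hZ y hy
      refine ⟨n, hn, ?_⟩
      show (π y) ^ n = 1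
      rw [← map_pow]
      exact (QuotientGroup.eq_one_iff _).mpr hn1
    have hQ' : Group.nilpotencyClass (Q ⧸ Z) ≤ c := by
      rw [nilpotencyClass_quotient_center]
      omega
    obtain ⟨m, hm, hm1⟩ := ih (Q ⧸ Z) inferInstance inferInstance inferInstance hQ' hZ' (π x)
    have : x ^ m ∈ Z := by
      have h4 : π (x ^ m) = 1 := by rw [map_pow]; exact hm1
      exact (QuotientGroup.eq_one_iff _).mp h4
    obtain ⟨k, hk, hk1⟩ := hZ _ this
    exact ⟨m * k, Nat.mul_pos hm hk, by rw [pow_mul, hk1]⟩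

/-- A f.g. nilpotent torsion group is finite. -/
lemma finite_of_fg_nilpotent_torsion :
    ∀ (c : ℕ) (Q : Type u) (_ : Group Q) (_ : Group.FG Q) (_ : Group.IsNilpotent Q),
      Group.nilpotencyClass Q ≤ c →
      (∀ x : Q, ∃ n : ℕ, 0 < n ∧ x ^ n = 1) → Finite Q := by
  intro c
  induction c with
  | zero =>
    intro Q _ _ _ hc _
    have : Subsingleton Q := (nilpotencyClass_zero_iff_subsingleton).mp (Nat.le_zero.mp hc)
    exact Finite.of_subsingleton
  | succ c ih =>
    intro Q _ _ _ hc hT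
    set Z := Subgroup.center Q
    have hQ' : Group.nilpotencyClass (Q ⧸ Z) ≤ c := by
      rw [nilpotencyClass_quotient_center]; omega
    have hT' : ∀ x : Q ⧸ Z, ∃ n : ℕ, 0 < n ∧ x ^ n = 1 := by
      intro x
      obtain ⟨y, rfl⟩ := QuotientGroup.mk'_surjective Z x
      obtain ⟨n, hn, hn1⟩ := hT y
      exact ⟨n, hn, by rw [← map_pow, hn1, map_one]⟩
    haveI : Finite (Q ⧸ Z) := ih (Q ⧸ Z) inferInstance inferInstance inferInstance hQ' hT'
    haveI : Z.FiniteIndex := ⟨Subgroup.index_ne_zero_of_finite⟩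
    haveI : Group.FG Z := Subgroup.fg_of_index_ne_zero Z
    haveI : Finite Z := by
      open scoped IsMulCommutative in
      apply finite_of_commGroup_fg_torsion
      intro a
      obtain ⟨n, hn, hn1⟩ := hT (a : Q)
      exact ⟨n, hn, by ext; simpa using hn1⟩
    exact Finite.of_equiv _ (Subgroup.groupEquivQuotientProdSubgroup (s := Z)).symm

/-- A group is residually finite if every nontrivial element survives in some
finite quotient. -/
def ResiduallyFinite (G : Type*) [Group G] : Prop :=
  ∀ g : G, g ≠ 1 → ∃ (F : Type) (_ : Group F) (_ : Finite F) (ρ : G →* F), ρ g ≠ 1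

/-- Every finitely generated nilpotent group is residually finite. -/
theorem residuallyFinite_of_fg_nilpotent (G : Type*) [Group G] [Group.FG G]
    [Group.IsNilpotent G] : ResiduallyFinite G := by
  intro g hg
  -- Zorn: a normal subgroup maximal with respect to not containing g
  set s : Set (Subgroup G) := {N | N.Normal ∧ g ∉ N} with hs
  have hbot : (⊥ : Subgroup G) ∈ s := ⟨inferInstance, by simpa using hg⟩
  obtain ⟨N, -, hNmax⟩ : ∃ N, ⊥ ≤ N ∧ Maximal (· ∈ s) N := by
    apply zorn_le_nonempty₀ s ?_ ⊥ hbot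
    · intro c hcs hchain y hy
      refine ⟨sSup c, ⟨?_, ?_⟩, fun z hz => le_sSup hz⟩
      · constructor
        intro x hx k
        have hx' := Subgroup.mem_sSup_of_directedOn ⟨y, hy⟩ hchain.directedOn |>.mp hx
        obtain ⟨H, hHc, hxH⟩ := hx'
        have : k * x * k⁻¹ ∈ H := (hcs hHc).1.conj_mem x hxH k
        exact le_sSup hHc this
      · intro hgmem
        obtain ⟨H, hHc, hgH⟩ :=
          (Subgroup.mem_sSup_of_directedOn ⟨y, hy⟩ hchain.directedOn).mp hgmem
        exact (hcs hHc).2 hgH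
  obtain ⟨hNnormal, hgN⟩ := hNmax.prop
  haveI := hNnormal
  set Q := G ⧸ N
  let π : G →* Q := QuotientGroup.mk' N
  have hπg : π g ≠ 1 := fun h => hgN ((QuotientGroup.eq_one_iff _).mp h)
  -- every nontrivial central element has g-bar in its cyclic subgroup
  have key : ∀ w : Q, w ∈ Subgroup.center Q → w ≠ 1 → π g ∈ Subgroup.zpowers w := by
    intro w hw hw1
    have hnormal : (Subgroup.zpowers w).Normal := by
      constructor
      intro a ha k
      obtain ⟨j, rfl⟩ := Subgroup.mem_zpowers_iff.mp ha
      have : w ^ j ∈ Subgroup.center Q := Subgroup.zpow_mem (Subgroup.center Q) hw j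
      rw [Subgroup.mem_center_iff] at this
      rw [this k, mul_assoc, mul_inv_cancel, mul_one]
      exact Subgroup.mem_zpowers_iff.mpr ⟨j, rfl⟩
    have hle : N ≤ Subgroup.comap π (Subgroup.zpowers w) := by
      intro x hx
      have hx1 : π x = 1 := (QuotientGroup.eq_one_iff _).mpr hx
      exact Subgroup.mem_comap.mpr (by rw [hx1]; exact Subgroup.one_mem _)
    have hK : N < Subgroup.comap π (Subgroup.zpowers w) := by
      refine lt_of_le_of_ne hle ?_
      intro heq
      obtain ⟨x, rfl⟩ := QuotientGroup.mk'_surjective N w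
      have hxK : x ∈ Subgroup.comap π (Subgroup.zpowers (π x)) :=
        Subgroup.mem_comap.mpr (Subgroup.mem_zpowers _)
      rw [← heq] at hxK
      exact hw1 ((QuotientGroup.eq_one_iff _).mpr hxK)
    have : g ∈ Subgroup.comap π (Subgroup.zpowers w) := by
      by_contra hgK
      have hmem : Subgroup.comap π (Subgroup.zpowers w) ∈ s :=
        ⟨hnormal.comap π, hgK⟩
      exact hK.ne (hNmax.eq_of_le hmem hK.le)
    exact this
  -- center of Q is torsion
  have hZtorsion : ∀ z ∈ Subgroup.center Q, ∃ n : ℕ, 0 < n ∧ z ^ n = 1 := by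
    intro z hz
    by_cases hz1 : z = 1
    · exact ⟨1, one_pos, by simp [hz1]⟩
    obtain ⟨a, ha⟩ := Subgroup.mem_zpowers_iff.mp (key z hz hz1)
    have ha0 : a ≠ 0 := by
      rintro rfl
      exact hπg (by simpa using ha.symm)
    set m : ℕ := 2 * a.natAbs with hm
    have hmpos : (0:ℕ) < m := by positivity
    by_cases hzm : z ^ m = 1
    · exact ⟨m, hmpos, hzm⟩
    · have hzmc : z ^ m ∈ Subgroup.center Q := Subgroup.pow_mem _ hz m
      obtain ⟨b, hb⟩ := Subgroup.mem_zpowers_iff.mp (key (z ^ m) hzmc hzm)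
      rw [← zpow_natCast z m, ← zpow_mul] at hb
      have hzk : z ^ ((m : ℤ) * b - a) = 1 := by
        rw [zpow_sub, hb, ha, mul_inv_cancel]
      have hk0 : (m : ℤ) * b - a ≠ 0 := by
        intro h0
        have h1 : a = (m : ℤ) * b := by omega
        have h2 : a.natAbs = m * b.natAbs := by
          rw [h1, Int.natAbs_mul]
          simp
        have hA : a.natAbs ≠ 0 := Int.natAbs_ne_zero.mpr ha0
        rw [hm] at h2
        rcases Nat.eq_zero_or_pos b.natAbs with hb | hb
        · rw [hb, Nat.mul_zero] at h2
          exact hA h2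
        · have h3 : 2 * a.natAbs ≤ 2 * a.natAbs * b.natAbs := Nat.le_mul_of_pos_right _ hb
          omega
      have : IsOfFinOrder z := by
        apply isOfFinOrder_iff_zpow_eq_one.mpr ⟨_, hk0, hzk⟩
      obtain ⟨n, hn, hn1⟩ := isOfFinOrder_iff_pow_eq_one.mp this
      exact ⟨n, hn, hn1⟩
  -- hence Q is a finite group
  have hQtorsion := torsion_of_center_torsion (Group.nilpotencyClass Q) Q
    inferInstance inferInstance inferInstance le_rfl hZtorsion
  haveI : Finite Q := finite_of_fg_nilpotent_torsion (Group.nilpotencyClass Q) Q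
    inferInstance inferInstance inferInstance le_rfl hQtorsion
  obtain ⟨F, instF, fintF, ⟨e⟩⟩ := Finite.exists_type_univ_nonempty_mulEquiv.{_, 0} Q
  refine ⟨F, instF, inferInstance, e.toMonoidHom.comp π, ?_⟩
  simp only [MonoidHom.comp_apply, MulEquiv.coe_toMonoidHom]
  intro h
  apply hπg
  have := e.injective (h.trans (map_one e).symm)
  exact this
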